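/- For every nonempty compact set S ⊆ M there exist a point p ∈ S and a vector v ∈ E with ‖v‖ = 1 such that p + t • (1, v) ∉ I⁺(S) for every t ∈ [0, ∞); that is, there is a future-inextendible (future-complete) null geodesic ray starting on S that never enters the chronological future of S. (Minkowski-spacetime instance of the paper's Proposition quoting Minguzzi's Theorem 2.10, using that Minkowski spacetime is past-reflecting and spatially open.) -/

import Mathlib

open Set Metric

noncomputable section

/-- Spatial Euclidean factor. -/
abbrev E (n : ℕ) : Type := EuclideanSpace ℝ (Fin n)

/-- Minkowski spacetime `M = ℝ × E`. -/
abbrev M (n : ℕ) : Type := ℝ × E n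

variable {n : ℕ}

/-- Chronological relation `p ≪ q`. -/
def chron (p q : M n) : Prop := dist p.2 q.2 < q.1 - p.1

/-- Causal relation `p ≼ q`. -/
def causal (p q : M n) : Prop := dist p.2 q.2 ≤ q.1 - p.1

/-- Chronological future `I⁺(S)`. -/
def Iplus (S : Set (M n)) : Set (M n) := {q | ∃ p ∈ S, chron p q}

/-- Chronological past `I⁻(S)`. -/
def Iminus (S : Set (M n)) : Set (M n) := {q | ∃ p ∈ S, chron q p}

/-- `I(S) = I⁺(S) ∪ I⁻(S)`. -/
def Iboth (S : Set (M n)) : Set (M n) := Iplus S ∪ Iminus S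

/-- Causal future `J⁺(S)`. -/
def Jplus (S : Set (M n)) : Set (M n) := {q | ∃ p ∈ S, causal p q}

/-- Causal past `J⁻(S)`. -/
def Jminus (S : Set (M n)) : Set (M n) := {q | ∃ p ∈ S, causal q p}

/-- A set is achronal if no two of its points are chronologically related. -/
def Achronal (S : Set (M n)) : Prop := ∀ p ∈ S, ∀ q ∈ S, ¬ chron p q

/-- A set is acausal if no two distinct points of it are causally related. -/
def Acausal (S : Set (M n)) : Prop := ∀ p ∈ S, ∀ q ∈ S, p ≠ q → ¬ causal p q

/-- `edge(a)`: points `p ∈ closure a` such that every open neighborhood `O` of `p`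
contains `q, r` with `r ≪ p ≪ q` together with a continuous timelike curve in `O`
from `r` to `q` avoiding `a`. -/
def edge (a : Set (M n)) : Set (M n) :=
  {p | p ∈ closure a ∧ ∀ O : Set (M n), IsOpen O → p ∈ O →
    ∃ q ∈ O, ∃ r ∈ O, chron r p ∧ chron p q ∧
      ∃ γ : ℝ → M n, ContinuousOn γ (Icc 0 1) ∧ γ 0 = r ∧ γ 1 = q ∧
        (∀ s ∈ Icc (0:ℝ) 1, γ s ∈ O ∧ γ s ∉ a) ∧
        (∀ s ∈ Icc (0:ℝ) 1, ∀ t ∈ Icc (0:ℝ) 1, s < t → chron (γ s) (γ t))}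

/-- A slice: a closed achronal set with empty edge. -/
def IsSlice (Sg : Set (M n)) : Prop := IsClosed Sg ∧ Achronal Sg ∧ edge Sg = ∅

/-- A hypersurface in the slice `Sg`: a subset open in the subspace topology of `Sg`. -/
def IsHypersurfaceIn (Sg a : Set (M n)) : Prop :=
  a ⊆ Sg ∧ IsOpen ((Subtype.val : Sg → M n) ⁻¹' a)

/-- A hypersurface: subset of some slice, open in the slice's subspace topology. -/
def IsHypersurface (a : Set (M n)) : Prop := ∃ Sg, IsSlice Sg ∧ IsHypersurfaceIn Sg a

/-- The frontier (boundary) of `a` in the subspace topology of `Sg`,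
viewed as a subset of spacetime. -/
def frontierIn (Sg a : Set (M n)) : Set (M n) :=
  (Subtype.val : Sg → M n) '' frontier ((Subtype.val : Sg → M n) ⁻¹' a)

/-- A future-infinite causal worldline: the graph `{(t, x t) : t ≥ t₀}` of a
1-Lipschitz map defined on `[t₀, ∞)`. -/
def IsWorldline (W : Set (M n)) : Prop :=
  ∃ t₀ : ℝ, ∃ x : ℝ → E n, LipschitzOnWith 1 x (Ici t₀) ∧
    W = {p : M n | t₀ ≤ p.1 ∧ p.2 = x p.1}

/-- Domain of dependence `D(S)`: points through which every inextendible causal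
curve (graph of a 1-Lipschitz map `ℝ → E`) meets `S`. -/
def Dom (S : Set (M n)) : Set (M n) :=
  {p | ∀ x : ℝ → E n, LipschitzWith 1 x → x p.1 = p.2 → ∃ t : ℝ, (t, x t) ∈ S}

/-- Future domain of dependence `D⁺(S)`: every inextendible causal curve through `p`
meets `S` at some time `t ≤ p.1`. -/
def DomPlus (S : Set (M n)) : Set (M n) :=
  {p | ∀ x : ℝ → E n, LipschitzWith 1 x → x p.1 = p.2 →
    ∃ t : ℝ, t ≤ p.1 ∧ (t, x t) ∈ S}

/-- A `C¹` function has timelike gradient if at every point `∂T/∂t > ‖∇_E T‖`. -/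
def TimelikeGrad (T : M n → ℝ) : Prop :=
  ∀ p : M n,
    ‖(fderiv ℝ T p).comp (ContinuousLinearMap.inr ℝ ℝ (E n))‖ <
      fderiv ℝ T p ((1 : ℝ), (0 : E n))

/-- A past directed outward null deformation of the hypersurface `a` within the
open set `O`. -/
def IsPastOutwardNullDeformation (a O b : Set (M n)) : Prop :=
  IsHypersurface b ∧ Dom a ⊆ Dom b ∧ b ⊆ closure (Iminus a) ∧
  symmDiff a b ⊆ O ∧ edge b ⊆ edge a ∪ ((frontier (Iminus a) \ a) ∩ O)


/-- From every nonempty compact `S` there is a future-complete null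
ray starting on `S` that never enters `I⁺(S)`. -/
theorem stmt3 {n : ℕ} (hn : 0 < n) (S : Set (M n))
    (hS : IsCompact S) (hne : S.Nonempty) :
    ∃ p ∈ S, ∃ v : E n, ‖v‖ = 1 ∧
      ∀ t : ℝ, 0 ≤ t → p + t • (((1 : ℝ), v) : M n) ∉ Iplus S := by
  obtain ⟨v, hv1⟩ : ∃ v : E n, ‖v‖ = 1 :=
    ⟨EuclideanSpace.single ⟨0, hn⟩ 1, by simp [EuclideanSpace.norm_single]⟩
  set h : M n → ℝ := fun q => q.1 - inner ℝ v q.2 with hh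
  have hcont : Continuous h :=
    continuous_fst.sub ((continuous_const.inner continuous_snd))
  obtain ⟨p, hpS, hmin⟩ := hS.exists_isMinOn hne hcont.continuousOn
  refine ⟨p, hpS, v, hv1, ?_⟩
  intro t ht hq
  obtain ⟨s, hsS, hcs⟩ := hq
  set q : M n := p + t • (((1 : ℝ), v) : M n) with hqdef
  have hq1 : q.1 = p.1 + t := by simp [hqdef, mul_comm]
  have hq2 : q.2 = p.2 + t • v := rfl
  have hinner : (inner ℝ v (q.2 - s.2) : ℝ) ≤ dist s.2 q.2 := by
    calc (inner ℝ v (q.2 - s.2) : ℝ) ≤ ‖v‖ * ‖q.2 - s.2‖ := real_inner_le_norm _ _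
    _ = dist s.2 q.2 := by rw [hv1, one_mul, dist_eq_norm, norm_sub_rev]
  have hchron : dist s.2 q.2 < q.1 - s.1 := hcs
  have hvv : (inner ℝ v v : ℝ) = 1 := by
    rw [real_inner_self_eq_norm_sq, hv1]; norm_num
  have hq_eq : h q = h p := by
    simp only [hh, hq1, hq2, inner_add_right, real_inner_smul_right, hvv]
    ring
  have hps : h p ≤ h s := hmin hsS
  have : h s < h q := by
    have := hinner.trans_lt hchron
    simp only [hh, inner_sub_right] at this ⊢
    linarith
  linarith [hq_eq ▸ this, hps]

end
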